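/- Under consistency (Y = W·Y(1) + (1−W)·Y(0)), strong ignorability given the propensity score, and positivity, the average treatment effect on the treated satisfies E[Y(1) − Y(0) | W=1] = E_{e(X)|W=1}[ E[Y | W=1, e(X)] − E[Y | W=0, e(X)] ]; i.e., within strata of equal propensity score, the mean difference of observed outcomes between treated and untreated identifies the conditional treatment effect. -/

import Mathlib

open MeasureTheory ProbabilityTheory Filter

section AuxATT

variable {Ω : Type*} [m0 : MeasurableSpace Ω] {μ : Measure Ω}

lemma aux_cond_integral (μ : Measure Ω) (s : Set Ω) (f : Ω → ℝ) :
    ∫ ω, f ω ∂(μ[|s]) = (μ s).toReal⁻¹ * ∫ ω in s, f ω ∂μ := by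
  rw [ProbabilityTheory.cond, integral_smul_measure, ENNReal.toReal_inv, smul_eq_mul]

lemma aux_cond_setIntegral (μ : Measure Ω) (s : Set Ω) {A : Set Ω} (hA : MeasurableSet A)
    (f : Ω → ℝ) :
    ∫ ω in A, f ω ∂(μ[|s]) = (μ s).toReal⁻¹ * ∫ ω in A ∩ s, f ω ∂μ := by
  rw [ProbabilityTheory.cond, Measure.restrict_smul, integral_smul_measure,
    Measure.restrict_restrict hA, ENNReal.toReal_inv, smul_eq_mul]

lemma aux_integrable_cond {f : Ω → ℝ} (hf : Integrable f μ) (s : Set Ω) (hs : μ s ≠ 0) :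
    Integrable f (μ[|s]) := by
  rw [ProbabilityTheory.cond]
  exact (hf.restrict).smul_measure (ENNReal.inv_ne_top.mpr hs)

theorem att_aux (μ : Measure Ω) [IsProbabilityMeasure μ]
    (m n : {x : MeasurableSpace Ω // x ≤ m0}) (hmn : m.1 ≤ n.1)
    (W : Ω → ℝ) (hWbin : ∀ ω, W ω = 0 ∨ W ω = 1) (hWmeas : Measurable[m0] W)
    (Y1 Y0 Y : Ω → ℝ)
    (hY1int : Integrable Y1 μ) (hY0int : Integrable Y0 μ)
    (hconsist : ∀ ω, Y ω = W ω * Y1 ω + (1 - W ω) * Y0 ω)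
    (e : Ω → ℝ) (hemeas : Measurable[m0] e) (heM : Measurable[m.1] e)
    (hY0n : Measurable[n.1] Y0)
    (hpos : ∀ᵐ ω ∂μ, 0 < e ω ∧ e ω < 1)
    (hW1e : μ[W|m.1] =ᵐ[μ] e) (hWne : μ[W|n.1] =ᵐ[μ] e) :
    ∫ ω, (Y1 ω - Y0 ω) ∂(μ[|{ω | W ω = 1}])
      = ∫ ω, (((μ[|{ω | W ω = 1}])[Y|m.1]) ω - ((μ[|{ω | W ω = 0}])[Y|m.1]) ω)
          ∂(μ[|{ω | W ω = 1}]) := by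
  set S1 : Set Ω := {ω | W ω = 1} with hS1def
  set S0 : Set Ω := {ω | W ω = 0} with hS0def
  have hS1m : MeasurableSet[m0] S1 := hWmeas (measurableSet_singleton 1)
  have hS0m : MeasurableSet[m0] S0 := hWmeas (measurableSet_singleton 0)
  -- basic integrability
  have hWabs : ∀ ω, ‖W ω‖ ≤ 1 := by
    intro ω; rcases hWbin ω with h | h <;> simp [h]
  have hWint : Integrable W μ :=
    (integrable_const (1 : ℝ)).mono' hWmeas.aestronglyMeasurable (Eventually.of_forall hWabs)
  have heabs : ∀ᵐ ω ∂μ, ‖e ω‖ ≤ 1 := hpos.mono fun ω h => by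
    rw [Real.norm_eq_abs, abs_le]; constructor <;> linarith [h.1, h.2]
  have heint : Integrable e μ :=
    (integrable_const (1 : ℝ)).mono' hemeas.aestronglyMeasurable heabs
  have h1Wabs : ∀ᵐ ω ∂μ, ‖1 - W ω‖ ≤ 1 := Eventually.of_forall fun ω => by
    rcases hWbin ω with h | h <;> simp [h]
  have hYint : Integrable Y μ := by
    have hYeq : Y = fun ω => W ω * Y1 ω + (1 - W ω) * Y0 ω := funext hconsist
    rw [hYeq]
    exact (hY1int.bdd_mul hWmeas.aestronglyMeasurable (Eventually.of_forall hWabs)).add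
      (hY0int.bdd_mul (aestronglyMeasurable_const.sub hWmeas.aestronglyMeasurable) h1Wabs)
  -- positivity of strata
  haveI hne : (MeasureTheory.ae μ).NeBot := ae_neBot.mpr (IsProbabilityMeasure.ne_zero μ)
  have hp1 : μ S1 ≠ 0 := by
    intro h0
    have hW0 : W =ᵐ[μ] 0 := by
      refine ae_iff.mpr (measure_mono_null ?_ h0)
      intro ω hω
      rcases hWbin ω with h | h
      · exact absurd h hω
      · exact h
    have he0 : e =ᵐ[μ] 0 :=
      hW1e.symm.trans ((condExp_congr_ae hW0).trans (Filter.EventuallyEq.of_eq condExp_zero))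
    obtain ⟨ω, hω1, hω2⟩ := (hpos.and he0).exists
    rw [Pi.zero_apply] at hω2
    rw [hω2] at hω1
    exact lt_irrefl _ hω1.1
  have hp0 : μ S0 ≠ 0 := by
    intro h0
    have hW1' : W =ᵐ[μ] fun _ => (1 : ℝ) := by
      refine ae_iff.mpr (measure_mono_null ?_ h0)
      intro ω hω
      rcases hWbin ω with h | h
      · exact h
      · exact absurd h hω
    have he1 : e =ᵐ[μ] fun _ => (1 : ℝ) :=
      hW1e.symm.trans ((condExp_congr_ae hW1').trans
        (Filter.EventuallyEq.of_eq (condExp_const m.2 (1 : ℝ))))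
    obtain ⟨ω, hω1, hω2⟩ := (hpos.and he1).exists
    rw [hω2] at hω1
    exact lt_irrefl _ hω1.2
  haveI hP1 : IsProbabilityMeasure (μ[|S1]) := cond_isProbabilityMeasure hp1
  haveI hP0 : IsProbabilityMeasure (μ[|S0]) := cond_isProbabilityMeasure hp0
  -- a.e. membership under conditional measures
  have hmem0 : ∀ᵐ ω ∂(μ[|S0]), ω ∈ S0 := by
    rw [ae_iff]
    have h := cond_apply hS0m μ S0ᶜ
    exact (by simpa [Set.inter_compl_self] using h : μ[|S0] S0ᶜ = 0)
  have hmem1 : ∀ᵐ ω ∂(μ[|S1]), ω ∈ S1 := by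
    rw [ae_iff]
    have h := cond_apply hS1m μ S1ᶜ
    exact (by simpa [Set.inter_compl_self] using h : μ[|S1] S1ᶜ = 0)
  have hY0ae : Y =ᵐ[μ[|S0]] Y0 := hmem0.mono fun ω hω => by
    have hw : W ω = 0 := hω
    rw [hconsist ω, hw]; ring
  have hY1ae : Y =ᵐ[μ[|S1]] Y1 := hmem1.mono fun ω hω => by
    have hw : W ω = 1 := hω
    rw [hconsist ω, hw]; ring
  -- indicator bridges
  have hint1 : ∀ (f : Ω → ℝ) (A : Set Ω), MeasurableSet[m0] A →
      ∫ ω in A ∩ S1, f ω ∂μ = ∫ ω in A, f ω * W ω ∂μ := by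
    intro f A hA
    rw [← setIntegral_indicator hS1m]
    refine setIntegral_congr_fun hA fun ω _ => ?_
    rcases hWbin ω with h | h
    · have hns : ω ∉ S1 := by simp [hS1def, h]
      rw [Set.indicator_of_notMem hns, h, mul_zero]
    · have hs : ω ∈ S1 := h
      rw [Set.indicator_of_mem hs, h, mul_one]
  have hint0 : ∀ (f : Ω → ℝ) (A : Set Ω), MeasurableSet[m0] A →
      ∫ ω in A ∩ S0, f ω ∂μ = ∫ ω in A, f ω * (1 - W ω) ∂μ := by
    intro f A hA
    rw [← setIntegral_indicator hS0m]
    refine setIntegral_congr_fun hA fun ω _ => ?_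
    rcases hWbin ω with h | h
    · have hs : ω ∈ S0 := h
      rw [Set.indicator_of_mem hs, h]; ring
    · have hns : ω ∉ S0 := by simp [hS0def, h]
      rw [Set.indicator_of_notMem hns, h]; ring
  -- the swap lemma : replace W by e against a measurable factor
  have swap : ∀ (m' : {x : MeasurableSpace Ω // x ≤ m0}), μ[W|m'.1] =ᵐ[μ] e →
      ∀ (f : Ω → ℝ), StronglyMeasurable[m'.1] f → Integrable f μ →
      ∀ (A : Set Ω), MeasurableSet[m'.1] A →
      ∫ ω in A, f ω * W ω ∂μ = ∫ ω in A, f ω * e ω ∂μ := by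
    intro m' hWe f hf hfint A hA
    have hfW : Integrable (f * W) μ :=
      (hfint.bdd_mul hWmeas.aestronglyMeasurable (Eventually.of_forall hWabs)).congr
        (Eventually.of_forall fun ω => mul_comm _ _)
    have hpull : μ[f * W|m'.1] =ᵐ[μ] f * μ[W|m'.1] :=
      condExp_mul_of_stronglyMeasurable_left hf hfW hWint
    calc ∫ ω in A, f ω * W ω ∂μ = ∫ ω in A, (f * W) ω ∂μ := rfl
      _ = ∫ ω in A, (μ[f * W|m'.1]) ω ∂μ := (setIntegral_condExp m'.2 hfW hA).symm
      _ = ∫ ω in A, f ω * e ω ∂μ := by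
          refine setIntegral_congr_ae (m'.2 _ hA) ?_
          filter_upwards [hpull, hWe] with ω h1 h2 _
          rw [h1, Pi.mul_apply, h2]
  have swap' : ∀ (m' : {x : MeasurableSpace Ω // x ≤ m0}), μ[W|m'.1] =ᵐ[μ] e →
      ∀ (f : Ω → ℝ), StronglyMeasurable[m'.1] f → Integrable f μ →
      ∀ (A : Set Ω), MeasurableSet[m'.1] A →
      ∫ ω in A, f ω * (1 - W ω) ∂μ = ∫ ω in A, f ω * (1 - e ω) ∂μ := by
    intro m' hWe f hf hfint A hA
    have hfW : Integrable (fun ω => f ω * W ω) μ :=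
      (hfint.bdd_mul hWmeas.aestronglyMeasurable (Eventually.of_forall hWabs)).congr
        (Eventually.of_forall fun ω => mul_comm _ _)
    have hfe : Integrable (fun ω => f ω * e ω) μ :=
      (hfint.bdd_mul hemeas.aestronglyMeasurable heabs).congr
        (Eventually.of_forall fun ω => mul_comm _ _)
    have e1 : ∫ ω in A, f ω * (1 - W ω) ∂μ
        = (∫ ω in A, f ω ∂μ) - ∫ ω in A, f ω * W ω ∂μ := by
      rw [← integral_sub hfint.integrableOn hfW.integrableOn]
      refine integral_congr_ae (Eventually.of_forall fun ω => ?_)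
      ring
    have e2 : ∫ ω in A, f ω * (1 - e ω) ∂μ
        = (∫ ω in A, f ω ∂μ) - ∫ ω in A, f ω * e ω ∂μ := by
      rw [← integral_sub hfint.integrableOn hfe.integrableOn]
      refine integral_congr_ae (Eventually.of_forall fun ω => ?_)
      ring
    rw [e1, e2, swap m' hWe f hf hfint A hA]
  -- pull-out facts
  have h1esm : StronglyMeasurable[m.1] (fun ω => 1 - e ω) :=
    stronglyMeasurable_const.sub heM.stronglyMeasurable
  have h1eabs : ∀ᵐ ω ∂μ, ‖1 - e ω‖ ≤ 1 := hpos.mono fun ω h => by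
    rw [Real.norm_eq_abs, abs_le]; constructor <;> linarith [h.1, h.2]
  -- key : μ[Y0|m.1] is a version of (μ[|S0])[Y|m.1]
  have hcond0 : μ[Y0|m.1] =ᵐ[μ[|S0]] (μ[|S0])[Y|m.1] := by
    have hhsm : StronglyMeasurable[m.1] (μ[Y0|m.1]) := stronglyMeasurable_condExp
    have hhint : Integrable (μ[Y0|m.1]) μ := integrable_condExp
    refine ae_eq_condExp_of_forall_setIntegral_eq m.2 (aux_integrable_cond hYint S0 hp0)
      (fun s _ _ => (aux_integrable_cond hhint S0 hp0).integrableOn)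
      (fun A hA _ => ?_) hhsm.aestronglyMeasurable
    have hAm0 : MeasurableSet[m0] A := m.2 _ hA
    rw [aux_cond_setIntegral μ S0 hAm0 (μ[Y0|m.1]), aux_cond_setIntegral μ S0 hAm0 Y]
    congr 1
    rw [hint0 (μ[Y0|m.1]) A hAm0, hint0 Y A hAm0]
    have hYW : ∀ ω, Y ω * (1 - W ω) = Y0 ω * (1 - W ω) := by
      intro ω; rcases hWbin ω with hw | hw <;> rw [hconsist ω, hw] <;> ring
    have hφ : μ[(fun ω => 1 - e ω) * Y0|m.1] =ᵐ[μ] (fun ω => 1 - e ω) * μ[Y0|m.1] :=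
      condExp_stronglyMeasurable_mul_of_bound m.2 h1esm hY0int 1 h1eabs
    have h1eY0int : Integrable ((fun ω => 1 - e ω) * Y0) μ :=
      hY0int.bdd_mul (aestronglyMeasurable_const.sub hemeas.aestronglyMeasurable) h1eabs
    calc ∫ ω in A, (μ[Y0|m.1]) ω * (1 - W ω) ∂μ
        = ∫ ω in A, (μ[Y0|m.1]) ω * (1 - e ω) ∂μ :=
          swap' m hW1e (μ[Y0|m.1]) hhsm hhint A hA
      _ = ∫ ω in A, ((fun ω => 1 - e ω) * μ[Y0|m.1]) ω ∂μ := by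
          refine setIntegral_congr_ae hAm0 (Eventually.of_forall fun ω _ => ?_)
          simp [mul_comm]
      _ = ∫ ω in A, (μ[(fun ω => 1 - e ω) * Y0|m.1]) ω ∂μ :=
          (setIntegral_congr_ae hAm0 (hφ.mono fun ω h _ => h.symm))
      _ = ∫ ω in A, ((fun ω => 1 - e ω) * Y0) ω ∂μ :=
          setIntegral_condExp m.2 h1eY0int hA
      _ = ∫ ω in A, Y0 ω * (1 - e ω) ∂μ := by
          refine setIntegral_congr_ae hAm0 (Eventually.of_forall fun ω _ => ?_)
          simp [mul_comm]
      _ = ∫ ω in A, Y0 ω * (1 - W ω) ∂μ :=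
          (swap' n hWne Y0 hY0n.stronglyMeasurable hY0int A (hmn _ hA)).symm
      _ = ∫ ω in A, Y ω * (1 - W ω) ∂μ := by
          refine setIntegral_congr_ae hAm0 (Eventually.of_forall fun ω _ => ?_)
          rw [hYW ω]
  -- transfer the a.e. equality from μ[|S0] to μ
  have htrans : μ[Y0|m.1] =ᵐ[μ] (μ[|S0])[Y|m.1] := by
    have hh : StronglyMeasurable[m.1] (μ[Y0|m.1]) := stronglyMeasurable_condExp
    have hk : StronglyMeasurable[m.1] ((μ[|S0])[Y|m.1]) := stronglyMeasurable_condExp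
    set D : Set Ω := {ω | ¬ (μ[Y0|m.1]) ω = ((μ[|S0])[Y|m.1]) ω} with hDdef
    have hDm : MeasurableSet[m.1] D :=
      (measurableSet_eq_fun hh.measurable hk.measurable).compl
    have hD0 : (μ[|S0]) D = 0 := by
      have h := hcond0
      rw [Filter.EventuallyEq, ae_iff] at h
      exact h
    have hDS0 : μ (D ∩ S0) = 0 := by
      have hca : (μ S0)⁻¹ * μ (S0 ∩ D) = 0 := by
        rw [← cond_apply hS0m μ D]; exact hD0
      rcases mul_eq_zero.mp hca with h | h
      · exact absurd (ENNReal.inv_eq_zero.mp h) (measure_ne_top μ S0)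
      · rwa [Set.inter_comm] at h
    have hi1 : ∫ ω in D, (1 : ℝ) * (1 - W ω) ∂μ = 0 := by
      rw [← hint0 (fun _ => (1 : ℝ)) D (m.2 _ hDm), setIntegral_const]
      simp [Measure.real, hDS0]
    have hi2 : ∫ ω in D, (1 : ℝ) * (1 - e ω) ∂μ = 0 := by
      rw [← swap' m hW1e (fun _ => (1 : ℝ)) stronglyMeasurable_const
        (integrable_const 1) D hDm]
      exact hi1
    have hi3 : ∫ ω in D, (1 - e ω) ∂μ = 0 := by
      rw [← hi2]
      refine integral_congr_ae (Eventually.of_forall fun ω => ?_)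
      ring
    have hnn : 0 ≤ᵐ[μ.restrict D] fun ω => 1 - e ω :=
      ae_restrict_of_ae (hpos.mono fun ω h => by simp only [Pi.zero_apply]; linarith [h.2])
    have h1eint : Integrable (fun ω => 1 - e ω) μ := (integrable_const 1).sub heint
    have hzero : (fun ω => 1 - e ω) =ᵐ[μ.restrict D] 0 :=
      (integral_eq_zero_iff_of_nonneg_ae hnn h1eint.integrableOn).mp hi3
    have hDnull : μ D = 0 := by
      have hfalse : ∀ᵐ ω ∂(μ.restrict D), False := by
        filter_upwards [hzero, ae_restrict_of_ae hpos] with ω h1 h2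
        simp only [Pi.zero_apply] at h1
        linarith [h2.2]
      have h' : μ.restrict D {ω | ¬ False} = 0 := ae_iff.mp hfalse
      simp only [not_false_iff, Set.setOf_true] at h'
      rwa [Measure.restrict_apply_univ] at h'
    exact ae_iff.mpr hDnull
  -- integrabilities w.r.t. conditional measures
  have hY1c : Integrable Y1 (μ[|S1]) := aux_integrable_cond hY1int S1 hp1
  have hY0c : Integrable Y0 (μ[|S1]) := aux_integrable_cond hY0int S1 hp1
  have hYc1 : Integrable Y (μ[|S1]) := aux_integrable_cond hYint S1 hp1
  have htrans1 : μ[Y0|m.1] =ᵐ[μ[|S1]] (μ[|S0])[Y|m.1] :=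
    htrans.filter_mono (Measure.AbsolutelyContinuous.ae_le cond_absolutelyContinuous)
  -- term A : E_{ν1}[ν1[Y|m.1]] = E_{ν1}[Y1]
  have hA' : ∫ ω, ((μ[|S1])[Y|m.1]) ω ∂(μ[|S1]) = ∫ ω, Y1 ω ∂(μ[|S1]) := by
    rw [integral_condExp m.2]
    exact integral_congr_ae hY1ae
  -- term B : E_{ν1}[ν0[Y|m.1]] = E_{ν1}[Y0]
  have hB' : ∫ ω, ((μ[|S0])[Y|m.1]) ω ∂(μ[|S1]) = ∫ ω, Y0 ω ∂(μ[|S1]) := by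
    have hstep : ∫ ω in S1, (μ[Y0|m.1]) ω ∂μ = ∫ ω in S1, Y0 ω ∂μ := by
      have heY0int : Integrable (e * Y0) μ :=
        hY0int.bdd_mul hemeas.aestronglyMeasurable heabs
      have hφe : μ[e * Y0|m.1] =ᵐ[μ] e * μ[Y0|m.1] :=
        condExp_stronglyMeasurable_mul_of_bound m.2 heM.stronglyMeasurable hY0int 1 heabs
      calc ∫ ω in S1, (μ[Y0|m.1]) ω ∂μ
          = ∫ ω in Set.univ ∩ S1, (μ[Y0|m.1]) ω ∂μ := by rw [Set.univ_inter]
        _ = ∫ ω in Set.univ, (μ[Y0|m.1]) ω * W ω ∂μ :=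
            hint1 (μ[Y0|m.1]) Set.univ (@MeasurableSet.univ Ω m0)
        _ = ∫ ω in Set.univ, (μ[Y0|m.1]) ω * e ω ∂μ :=
            swap m hW1e (μ[Y0|m.1]) stronglyMeasurable_condExp integrable_condExp
              Set.univ (@MeasurableSet.univ Ω m.1)
        _ = ∫ ω, (e * μ[Y0|m.1]) ω ∂μ := by
            rw [Measure.restrict_univ]
            exact integral_congr_ae (Eventually.of_forall fun ω => by
              simp [Pi.mul_apply, mul_comm])
        _ = ∫ ω, (μ[e * Y0|m.1]) ω ∂μ := (integral_congr_ae hφe).symm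
        _ = ∫ ω, (e * Y0) ω ∂μ := integral_condExp m.2
        _ = ∫ ω in Set.univ, Y0 ω * e ω ∂μ := by
            rw [Measure.restrict_univ]
            exact integral_congr_ae (Eventually.of_forall fun ω => by
              simp [Pi.mul_apply, mul_comm])
        _ = ∫ ω in Set.univ, Y0 ω * W ω ∂μ :=
            (swap n hWne Y0 hY0n.stronglyMeasurable hY0int Set.univ
              (@MeasurableSet.univ Ω n.1)).symm
        _ = ∫ ω in Set.univ ∩ S1, Y0 ω ∂μ :=
            (hint1 Y0 Set.univ (@MeasurableSet.univ Ω m0)).symm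
        _ = ∫ ω in S1, Y0 ω ∂μ := by rw [Set.univ_inter]
    calc ∫ ω, ((μ[|S0])[Y|m.1]) ω ∂(μ[|S1])
        = ∫ ω, (μ[Y0|m.1]) ω ∂(μ[|S1]) := integral_congr_ae htrans1.symm
      _ = (μ S1).toReal⁻¹ * ∫ ω in S1, (μ[Y0|m.1]) ω ∂μ := aux_cond_integral μ S1 _
      _ = (μ S1).toReal⁻¹ * ∫ ω in S1, Y0 ω ∂μ := by rw [hstep]
      _ = ∫ ω, Y0 ω ∂(μ[|S1]) := (aux_cond_integral μ S1 _).symm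
  -- final assembly
  have hc1 : Integrable ((μ[|S1])[Y|m.1]) (μ[|S1]) := integrable_condExp
  have hc0 : Integrable ((μ[|S0])[Y|m.1]) (μ[|S1]) :=
    (aux_integrable_cond (integrable_condExp (m := m.1) (f := Y0) (μ := μ)) S1 hp1).congr htrans1
  rw [integral_sub hY1c hY0c, integral_sub hc1 hc0, hA', hB']

end AuxATT

theorem att_identification_propensity_strata
    {Ω E : Type*} [m0 : MeasurableSpace Ω] [MeasurableSpace E]
    (μ : Measure Ω) [IsProbabilityMeasure μ]
    (W : Ω → ℝ) (hWbin : ∀ ω, W ω = 0 ∨ W ω = 1) (hWmeas : Measurable W)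
    (X : Ω → E) (hX : Measurable X)
    (Y1 Y0 Y : Ω → ℝ) (hY1 : Measurable Y1) (hY0 : Measurable Y0)
    (hY1int : Integrable Y1 μ) (hY0int : Integrable Y0 μ)
    -- consistency
    (hconsist : ∀ ω, Y ω = W ω * Y1 ω + (1 - W ω) * Y0 ω)
    -- the propensity score
    (e : Ω → ℝ) (hemeas : Measurable e)
    (he : e =ᵐ[μ] μ[W | MeasurableSpace.comap X inferInstance])
    -- positivity
    (hpos : ∀ᵐ ω ∂μ, 0 < e ω ∧ e ω < 1)
    -- strong ignorability given the propensity score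
    (hignorable :
      μ[W | MeasurableSpace.comap (fun ω => (Y1 ω, Y0 ω, e ω)) inferInstance]
        =ᵐ[μ] μ[W | MeasurableSpace.comap e inferInstance]) :
    -- ATT = E_{e(X)|W=1}[ E[Y|W=1,e(X)] − E[Y|W=0,e(X)] ]
    ∫ ω, (Y1 ω - Y0 ω) ∂(ProbabilityTheory.cond μ {ω | W ω = 1})
      = ∫ ω,
          (MeasureTheory.condExp (MeasurableSpace.comap e inferInstance)
              (ProbabilityTheory.cond μ {ω | W ω = 1}) Y ω
            - MeasureTheory.condExp (MeasurableSpace.comap e inferInstance)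
              (ProbabilityTheory.cond μ {ω | W ω = 0}) Y ω)
          ∂(ProbabilityTheory.cond μ {ω | W ω = 1}) := by
  have hm : MeasurableSpace.comap e inferInstance ≤ m0 := hemeas.comap_le
  have htriple : Measurable fun ω => (Y1 ω, Y0 ω, e ω) := hY1.prodMk (hY0.prodMk hemeas)
  have hn : MeasurableSpace.comap (fun ω => (Y1 ω, Y0 ω, e ω)) inferInstance ≤ m0 :=
    htriple.comap_le
  have hmn : MeasurableSpace.comap e inferInstance
      ≤ MeasurableSpace.comap (fun ω => (Y1 ω, Y0 ω, e ω)) inferInstance := by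
    have h1 : MeasurableSpace.comap e inferInstance
        = MeasurableSpace.comap (fun ω => (Y1 ω, Y0 ω, e ω))
            (MeasurableSpace.comap (fun p : ℝ × ℝ × ℝ => p.2.2) inferInstance) :=
      (MeasurableSpace.comap_comp (g := fun ω => (Y1 ω, Y0 ω, e ω))
        (f := fun p : ℝ × ℝ × ℝ => p.2.2)).symm
    rw [h1]
    exact MeasurableSpace.comap_mono (measurable_snd.comp measurable_snd).comap_le
  have heM : Measurable[MeasurableSpace.comap e inferInstance] e :=
    measurable_iff_comap_le.mpr le_rfl
  have hY0n : Measurable[MeasurableSpace.comap (fun ω => (Y1 ω, Y0 ω, e ω)) inferInstance] Y0 :=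
    (measurable_fst.comp measurable_snd).comp (measurable_iff_comap_le.mpr le_rfl)
  -- the propensity score is a version of E[W | e]
  have hWabs : ∀ ω, ‖W ω‖ ≤ 1 := by
    intro ω; rcases hWbin ω with h | h <;> simp [h]
  have hWint : Integrable W μ :=
    (integrable_const (1 : ℝ)).mono' hWmeas.aestronglyMeasurable (Eventually.of_forall hWabs)
  have heabs : ∀ᵐ ω ∂μ, ‖e ω‖ ≤ 1 := hpos.mono fun ω h => by
    rw [Real.norm_eq_abs, abs_le]; constructor <;> linarith [h.1, h.2]
  have heint : Integrable e μ :=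
    (integrable_const (1 : ℝ)).mono' hemeas.aestronglyMeasurable heabs
  have hW1e : μ[W|MeasurableSpace.comap e inferInstance] =ᵐ[μ] e := by
    have hgX : StronglyMeasurable[MeasurableSpace.comap X inferInstance]
        (μ[W|MeasurableSpace.comap X inferInstance]) := stronglyMeasurable_condExp
    refine (ae_eq_condExp_of_forall_setIntegral_eq hm hWint
      (fun s _ _ => heint.integrableOn)
      (fun s hs _ => ?_)
      (Measurable.stronglyMeasurable heM).aestronglyMeasurable).symm
    rw [MeasurableSpace.measurableSet_comap] at hs
    obtain ⟨B, hB, rfl⟩ := hs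
    have hsets : (e ⁻¹' B : Set Ω)
        =ᵐ[μ] ((μ[W|MeasurableSpace.comap X inferInstance]) ⁻¹' B : Set Ω) := by
      rw [Filter.eventuallyEq_set]
      filter_upwards [he] with ω hω
      simp [Set.mem_preimage, hω]
    have hgB : MeasurableSet[MeasurableSpace.comap X inferInstance]
        ((μ[W|MeasurableSpace.comap X inferInstance]) ⁻¹' B) :=
      hgX.measurable hB
    calc ∫ ω in e ⁻¹' B, e ω ∂μ
        = ∫ ω in (μ[W|MeasurableSpace.comap X inferInstance]) ⁻¹' B, e ω ∂μ :=
          setIntegral_congr_set hsets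
      _ = ∫ ω in (μ[W|MeasurableSpace.comap X inferInstance]) ⁻¹' B,
            (μ[W|MeasurableSpace.comap X inferInstance]) ω ∂μ :=
          setIntegral_congr_ae (hX.comap_le _ hgB) (he.mono fun ω h _ => h)
      _ = ∫ ω in (μ[W|MeasurableSpace.comap X inferInstance]) ⁻¹' B, W ω ∂μ :=
          setIntegral_condExp hX.comap_le hWint hgB
      _ = ∫ ω in e ⁻¹' B, W ω ∂μ := setIntegral_congr_set hsets.symm
  have hWne : μ[W|MeasurableSpace.comap (fun ω => (Y1 ω, Y0 ω, e ω)) inferInstance] =ᵐ[μ] e :=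
    hignorable.trans hW1e
  exact att_aux μ ⟨MeasurableSpace.comap e inferInstance, hm⟩
    ⟨MeasurableSpace.comap (fun ω => (Y1 ω, Y0 ω, e ω)) inferInstance, hn⟩ hmn
    W hWbin hWmeas Y1 Y0 Y hY1int hY0int hconsist e hemeas heM hY0n hpos hW1e hWne
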